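/- Let B be a Boolean subalgebra of the power set of ω1 containing all finite subsets of ω1, let L be a Stone space of B with clopen correspondence X ↦ [X], let K be a totally disconnected compact Hausdorff space, and let T : C(L, ℝ) → C(K, ℝ) be an isomorphic embedding of Banach spaces. Then there exist a Boolean subalgebra A0 of the algebra of clopen subsets of K with cardinality at most ℵ1 and a family (ψ_ξ)_{ξ<ω1} of continuous linear functionals on C(K, ℝ) with ‖ψ_ξ‖ ≤ ‖T^{-1}‖ for all ξ, such that for every ξ < ω1 and every continuous linear functional ρ on C(K, ℝ) satisfying ρ(χ_a) = ψ_ξ(χ_a) for every a ∈ A0, one has ρ(T(χ_{[{λ}]})) = 1 if λ = ξ and ρ(T(χ_{[{λ}]})) = 0 if λ ≠ ξ, for every λ < ω1. -/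

import Mathlib

open Cardinal

/-- The indicator function of a clopen set is continuous. -/
theorem IsClopen.continuous_indicator_one {K : Type*} [TopologicalSpace K] {a : Set K}
    (ha : IsClopen a) : Continuous (a.indicator (fun _ => (1 : ℝ))) := by
  apply IsLocallyConstant.continuous
  intro s
  classical
  by_cases h1 : (1 : ℝ) ∈ s <;> by_cases h0 : (0 : ℝ) ∈ s
  · have : a.indicator (fun _ => (1 : ℝ)) ⁻¹' s = Set.univ := by
      ext x; by_cases hx : x ∈ a <;> simp [Set.indicator_apply, hx, h1, h0]
    rw [this]; exact isOpen_univ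
  · have : a.indicator (fun _ => (1 : ℝ)) ⁻¹' s = a := by
      ext x; by_cases hx : x ∈ a <;> simp [Set.indicator_apply, hx, h1, h0]
    rw [this]; exact ha.2
  · have : a.indicator (fun _ => (1 : ℝ)) ⁻¹' s = aᶜ := by
      ext x; by_cases hx : x ∈ a <;> simp [Set.indicator_apply, hx, h1, h0]
    rw [this]; exact ha.1.isOpen_compl
  · have : a.indicator (fun _ => (1 : ℝ)) ⁻¹' s = ∅ := by
      ext x; by_cases hx : x ∈ a <;> simp [Set.indicator_apply, hx, h1, h0]
    rw [this]; exact isOpen_empty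

/-- The characteristic function of a clopen set, as a continuous real-valued function. -/
noncomputable def chi {K : Type*} [TopologicalSpace K] (a : Set K) (ha : IsClopen a) :
    C(K, ℝ) := ⟨a.indicator (fun _ => 1), ha.continuous_indicator_one⟩

/-- Iterative Boolean closure. -/
def BAgen {α : Type} (S : Set (Set α)) : ℕ → Set (Set α)
  | 0 => insert ∅ S
  | (n+1) => BAgen S n ∪ compl '' BAgen S n ∪ Set.image2 (· ∪ ·) (BAgen S n) (BAgen S n)

theorem BAgen_subset_succ {α : Type} (S : Set (Set α)) (n : ℕ) :
    BAgen S n ⊆ BAgen S (n+1) := fun _ ha => Or.inl (Or.inl ha)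

theorem BAgen_mono {α : Type} (S : Set (Set α)) {m n : ℕ} (h : m ≤ n) :
    BAgen S m ⊆ BAgen S n := by
  induction h with
  | refl => exact subset_rfl
  | step _ ih => exact ih.trans (BAgen_subset_succ S _)

theorem BAgen_isClopen {K : Type} [TopologicalSpace K] {S : Set (Set K)}
    (hS : ∀ s ∈ S, IsClopen s) : ∀ n, ∀ a ∈ BAgen S n, IsClopen a := by
  intro n
  induction n with
  | zero =>
    rintro a (rfl | ha)
    · exact isClopen_empty
    · exact hS a ha
  | succ n ih =>
    rintro a ((ha | ⟨b, hb, rfl⟩) | ha)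
    · exact ih a ha
    · exact (ih b hb).compl
    · obtain ⟨b, hb, c, hc, rfl⟩ := ha
      exact (ih b hb).union (ih c hc)

theorem BAgen_card {α : Type} {S : Set (Set α)} (hS : #S ≤ aleph 1) :
    ∀ n : ℕ, #(BAgen S n) ≤ aleph 1 := by
  have hω : ℵ₀ ≤ aleph 1 := aleph0_le_aleph 1
  intro n
  induction n with
  | zero =>
    refine (Cardinal.mk_insert_le).trans ?_
    calc #S + 1 ≤ aleph 1 + 1 := by gcongr
    _ = aleph 1 := Cardinal.add_one_eq hω
  | succ n ih =>
    refine (Cardinal.mk_union_le _ _).trans ?_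
    have h1 : #(BAgen S n ∪ compl '' BAgen S n : Set (Set α)) ≤ aleph 1 := by
      refine (Cardinal.mk_union_le _ _).trans ?_
      calc #(BAgen S n) + #(compl '' BAgen S n) ≤ aleph 1 + aleph 1 := by
            exact add_le_add ih (Cardinal.mk_image_le.trans ih)
        _ = aleph 1 := Cardinal.add_eq_self hω
    have h2 : #(Set.image2 (· ∪ ·) (BAgen S n) (BAgen S n)) ≤ aleph 1 := by
      refine (Cardinal.mk_image2_le).trans ?_
      calc #(BAgen S n) * #(BAgen S n) ≤ aleph 1 * aleph 1 := by gcongr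
        _ = aleph 1 := Cardinal.mul_eq_self hω
    calc _ ≤ aleph 1 + aleph 1 := add_le_add h1 h2
      _ = aleph 1 := Cardinal.add_eq_self hω

theorem exists_chi_approx {K : Type} [TopologicalSpace K] [CompactSpace K] [T2Space K]
    [TotallyDisconnectedSpace K] (f : C(K, ℝ)) {ε : ℝ} (hε : 0 < ε) :
    ∃ (m : ℕ) (a : Fin m → Set K) (hcl : ∀ i, IsClopen (a i)) (c : Fin m → ℝ),
      ‖f - ∑ i, c i • chi (a i) (hcl i)‖ ≤ ε := by
  classical
  have hU : ∀ x : K, ∃ U : Set K, IsClopen U ∧ x ∈ U ∧ ∀ z ∈ U, |f z - f x| < ε := by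
    intro x
    have hopen : IsOpen (f ⁻¹' Metric.ball (f x) ε) := Metric.isOpen_ball.preimage f.continuous
    have hxmem : x ∈ f ⁻¹' Metric.ball (f x) ε := by simp [Metric.mem_ball, hε]
    obtain ⟨U, hUcl, hxU, hUsub⟩ :=
      isTopologicalBasis_isClopen.exists_subset_of_mem_open hxmem hopen
    exact ⟨U, hUcl, hxU, fun z hz => by
      have := hUsub hz
      simpa [Metric.mem_ball, Real.dist_eq] using this⟩
  choose U hUcl hxU hUb using hU
  obtain ⟨s, hs⟩ := isCompact_univ.elim_finite_subcover U (fun x => (hUcl x).2)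
    (fun x _ => Set.mem_iUnion.2 ⟨x, hxU x⟩)
  set n := s.card with hn
  set y : Fin n → K := fun i => (s.equivFin.symm i : K) with hy
  set a : Fin n → Set K := fun i => U (y i) \ ⋃ j ∈ Finset.Iio i, U (y j) with ha
  have hcl : ∀ i, IsClopen (a i) := fun i =>
    (hUcl (y i)).diff (isClopen_biUnion_finset fun j _ => hUcl (y j))
  refine ⟨n, a, hcl, fun i => f (y i), ?_⟩
  rw [ContinuousMap.norm_le _ hε.le]
  intro x
  -- find the minimal index covering x
  have hxcov : ∃ i : Fin n, x ∈ U (y i) := by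
    have := hs (Set.mem_univ x)
    rw [Set.mem_iUnion₂] at this
    obtain ⟨z, hz, hxz⟩ := this
    refine ⟨s.equivFin ⟨z, hz⟩, ?_⟩
    have : y (s.equivFin ⟨z, hz⟩) = z := by simp [hy]
    rw [this]; exact hxz
  set Ifin : Finset (Fin n) := Finset.univ.filter (fun i => x ∈ U (y i)) with hIfin
  have hne : Ifin.Nonempty := by
    obtain ⟨i, hi⟩ := hxcov
    exact ⟨i, by simp [hIfin, hi]⟩
  set i₀ := Ifin.min' hne with hi₀
  have hxi₀ : x ∈ U (y i₀) := by
    have := Ifin.min'_mem hne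
    simpa [hIfin] using this
  have hmem : x ∈ a i₀ := by
    refine ⟨hxi₀, ?_⟩
    intro hxc
    rw [Set.mem_iUnion₂] at hxc
    obtain ⟨j, hj, hxj⟩ := hxc
    have hjI : j ∈ Ifin := by simp [hIfin, hxj]
    have := Ifin.min'_le j hjI
    rw [Finset.mem_Iio] at hj
    exact absurd (this.trans_lt hj) (lt_irrefl _)
  have hnotmem : ∀ i, i ≠ i₀ → x ∉ a i := by
    intro i hi hxi
    have hiI : i ∈ Ifin := by simp [hIfin, hxi.1]
    have h1 : i₀ ≤ i := Ifin.min'_le i hiI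
    have h2 : i₀ < i := lt_of_le_of_ne h1 (fun h => hi h.symm)
    exact hxi.2 (Set.mem_biUnion (Finset.mem_Iio.2 h2) hxi₀)
  have hsum : (∑ i, f (y i) • chi (a i) (hcl i)) x = f (y i₀) := by
    have : ∀ g : Fin n → C(K, ℝ), (∑ i, g i) x = ∑ i, g i x := fun g => by
      simp
    rw [this]
    rw [Finset.sum_eq_single i₀]
    · simp [chi, Set.indicator_of_mem hmem]
    · intro i _ hi
      simp [chi, Set.indicator_of_notMem (hnotmem i hi)]
    · intro h; exact absurd (Finset.mem_univ i₀) h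
  have : (f - ∑ i, f (y i) • chi (a i) (hcl i)) x = f x - f (y i₀) := by
    rw [ContinuousMap.sub_apply, hsum]
  rw [this, Real.norm_eq_abs]
  exact (hUb (y i₀) x hxi₀).le

set_option maxHeartbeats 1000000 in
/-- Let `B` be a Boolean subalgebra of the power set of `ω₁` containing all finite sets, `L` a
Stone space of `B` (via a Boolean isomorphism `e` from `B` onto the clopen algebra of `L`), `K`
a totally disconnected compact Hausdorff space and `T : C(L,ℝ) → C(K,ℝ)` an isomorphic
embedding, with `M` an upper bound for the norm of its inverse (`‖f‖ ≤ M * ‖T f‖`). Then there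
are a Boolean subalgebra `A0` of the clopen algebra of `K` of cardinality at most `ℵ₁` and
functionals `(ψ ξ)_{ξ<ω₁}` on `C(K,ℝ)` of norm at most `M` such that any functional `ρ`
agreeing with `ψ ξ` on the characteristic functions of members of `A0` satisfies
`ρ (T (χ_{[{l}]})) = δ_ξ({l})` for all `l < ω₁`. -/
theorem stmt14
    (B : Set (Set (Cardinal.aleph 1).ord.ToType))
    (hBcompl : ∀ X ∈ B, Xᶜ ∈ B)
    (hBunion : ∀ X ∈ B, ∀ Y ∈ B, X ∪ Y ∈ B)
    (hBfin : ∀ X : Set (Cardinal.aleph 1).ord.ToType, X.Finite → X ∈ B)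
    (L : Type) [TopologicalSpace L] [CompactSpace L] [T2Space L] [TotallyDisconnectedSpace L]
    (e : Set (Cardinal.aleph 1).ord.ToType → Set L)
    (heclopen : ∀ X ∈ B, IsClopen (e X))
    (heinj : ∀ X ∈ B, ∀ Y ∈ B, e X = e Y → X = Y)
    (hesurj : ∀ C : Set L, IsClopen C → ∃ X ∈ B, e X = C)
    (heunion : ∀ X ∈ B, ∀ Y ∈ B, e (X ∪ Y) = e X ∪ e Y)
    (hecompl : ∀ X ∈ B, e Xᶜ = (e X)ᶜ)
    (K : Type) [TopologicalSpace K] [CompactSpace K] [T2Space K] [TotallyDisconnectedSpace K]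
    (T : C(L, ℝ) →L[ℝ] C(K, ℝ)) (M : ℝ)
    (hT : ∀ f : C(L, ℝ), ‖f‖ ≤ M * ‖T f‖) :
    ∃ (A0 : Set (Set K)) (hA0 : ∀ a ∈ A0, IsClopen a),
      (∅ ∈ A0) ∧ (∀ a ∈ A0, aᶜ ∈ A0) ∧ (∀ a ∈ A0, ∀ b ∈ A0, a ∪ b ∈ A0) ∧
      #A0 ≤ Cardinal.aleph 1 ∧
      ∃ ψ : (Cardinal.aleph 1).ord.ToType → (C(K, ℝ) →L[ℝ] ℝ),
        (∀ ξ, ‖ψ ξ‖ ≤ M) ∧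
        ∀ ξ, ∀ ρ : C(K, ℝ) →L[ℝ] ℝ,
          (∀ a, ∀ ha : a ∈ A0, ρ (chi a (hA0 a ha)) = ψ ξ (chi a (hA0 a ha))) →
          ∀ l : (Cardinal.aleph 1).ord.ToType,
            ρ (T (chi (e {l}) (heclopen _ (hBfin _ (Set.finite_singleton l))))) =
              if l = ξ then 1 else 0 := by
    classical
  -- basic facts about B and e
  have hBempty : ∅ ∈ B := hBfin ∅ Set.finite_empty
  have hBsingle : ∀ l : ((Cardinal.aleph 1).ord.ToType), {l} ∈ B := fun l => hBfin _ (Set.finite_singleton l)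
  have hBuniv : Set.univ ∈ B := by simpa using hBcompl ∅ hBempty
  have he_empty : e ∅ = ∅ := by
    have h2 : e ((∅ : Set ((Cardinal.aleph 1).ord.ToType)) ∪ ∅ᶜ) = e ∅ ∪ e ∅ᶜ :=
      heunion ∅ hBempty ∅ᶜ (hBcompl ∅ hBempty)
    rw [Set.union_compl_self, hecompl ∅ hBempty] at h2
    have huniv : e (Set.univ : Set ((Cardinal.aleph 1).ord.ToType)) = Set.univ := by
      rw [h2]; exact Set.union_compl_self _
    have h4 := hecompl Set.univ hBuniv
    rw [huniv] at h4
    simpa using h4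
  have he_mono : ∀ X ∈ B, ∀ Y ∈ B, X ⊆ Y → e X ⊆ e Y := by
    intro X hX Y hY hXY
    have : e (X ∪ Y) = e X ∪ e Y := heunion X hX Y hY
    rw [Set.union_eq_self_of_subset_left hXY] at this
    rw [this]; exact Set.subset_union_left
  have hne : ∀ l : ((Cardinal.aleph 1).ord.ToType), (e {l}).Nonempty := by
    intro l
    rw [Set.nonempty_iff_ne_empty]
    intro h
    have := heinj {l} (hBsingle l) ∅ hBempty (by rw [h, he_empty])
    exact (Set.singleton_ne_empty l) this
  choose xpt hxpt using hne
  have hxdis : ∀ l ξ : ((Cardinal.aleph 1).ord.ToType), l ≠ ξ → xpt ξ ∉ e {l} := by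
    intro l ξ hlξ hmem
    have hsub : ({l} : Set ((Cardinal.aleph 1).ord.ToType)) ⊆ {ξ}ᶜ := by
      rw [Set.subset_compl_singleton_iff]
      simp [Ne.symm hlξ]
    have := he_mono {l} (hBsingle l) {ξ}ᶜ (hBcompl _ (hBsingle ξ)) hsub hmem
    rw [hecompl _ (hBsingle ξ)] at this
    exact this (hxpt ξ)
  -- χ values at the points
  have hchi_val : ∀ (l ξ : ((Cardinal.aleph 1).ord.ToType)) (h : IsClopen (e {l})),
      chi (e {l}) h (xpt ξ) = if l = ξ then 1 else 0 := by
    intro l ξ h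
    by_cases hlξ : l = ξ
    · subst hlξ
      simp [chi, Set.indicator_of_mem (hxpt l)]
    · simp [chi, Set.indicator_of_notMem (hxdis l ξ hlξ), hlξ]
  -- M is nonneg
  have hne0 : Nonempty ((Cardinal.aleph 1).ord.ToType) := by
    rw [Ordinal.toType_nonempty_iff_ne_zero]
    intro h0
    have hcard := Cardinal.card_ord (Cardinal.aleph 1)
    rw [h0, Ordinal.card_zero] at hcard
    have h5 := aleph0_le_aleph 1
    rw [← hcard] at h5
    simp at h5
    exact Cardinal.aleph0_ne_zero h5
  obtain ⟨ξ₀⟩ := hne0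
  have hM : 0 ≤ M := by
    have hcl0 := heclopen _ (hBsingle ξ₀)
    have h1 : (1:ℝ) ≤ ‖chi (e {ξ₀}) hcl0‖ := by
      have := ContinuousMap.norm_coe_le_norm (chi (e {ξ₀}) hcl0) (xpt ξ₀)
      rw [hchi_val ξ₀ ξ₀ hcl0] at this
      simpa using this
    have h2 := hT (chi (e {ξ₀}) hcl0)
    have h3 : (0:ℝ) ≤ ‖T (chi (e {ξ₀}) hcl0)‖ := norm_nonneg _
    nlinarith
  -- T is injective
  set Tl := (T : C(L, ℝ) →ₗ[ℝ] C(K, ℝ)) with hTl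
  have hTlapp : ∀ f, Tl f = T f := fun f => rfl
  have hinj : Function.Injective Tl := by
    intro f g hfg
    have h0 : ‖f - g‖ ≤ M * ‖T (f - g)‖ := hT _
    have h1 : T (f - g) = 0 := by
      rw [map_sub]
      have : T f = T g := hfg
      rw [this, sub_self]
    rw [h1, norm_zero, mul_zero] at h0
    exact sub_eq_zero.mp (norm_le_zero_iff.mp h0)
  -- construct the functionals ψ ξ via Hahn–Banach
  have hmain : ∀ ξ : ((Cardinal.aleph 1).ord.ToType), ∃ ψξ : C(K, ℝ) →L[ℝ] ℝ, ‖ψξ‖ ≤ M ∧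
      ∀ f : C(L, ℝ), ψξ (T f) = f (xpt ξ) := by
    intro ξ
    set p := LinearMap.range Tl with hp
    set eqv := LinearEquiv.ofInjective Tl hinj with heqv
    set φ : ↥p →ₗ[ℝ] ℝ :=
      (ContinuousMap.evalCLM ℝ (xpt ξ)).toLinearMap ∘ₗ eqv.symm.toLinearMap with hφ
    have hφapp : ∀ y : ↥p, φ y = (eqv.symm y) (xpt ξ) := fun y => rfl
    have hbound : ∀ y : ↥p, ‖φ y‖ ≤ M * ‖y‖ := by
      intro y
      set g := eqv.symm y with hg
      have hTg : Tl g = (y : C(K, ℝ)) := LinearEquiv.ofInjective_symm_apply Tl y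
      have h1 : ‖φ y‖ ≤ ‖g‖ := by
        rw [hφapp, Real.norm_eq_abs]
        exact (ContinuousMap.norm_coe_le_norm g (xpt ξ)).trans_eq' (by rw [Real.norm_eq_abs])
      have h2 : ‖g‖ ≤ M * ‖T g‖ := hT g
      have h3 : T g = (y : C(K, ℝ)) := hTg
      rw [h3] at h2
      exact h1.trans h2
    set φc := φ.mkContinuous M hbound with hφc
    obtain ⟨ψξ, hψext, hψnorm⟩ := exists_extension_norm_eq p φc
    refine ⟨ψξ, ?_, ?_⟩
    · rw [hψnorm]
      exact ContinuousLinearMap.opNorm_le_bound _ hM hbound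
    · intro f
      have hmem : T f ∈ p := ⟨f, rfl⟩
      have h1 : ψξ (T f) = φc ⟨T f, hmem⟩ := hψext ⟨T f, hmem⟩
      rw [h1]
      have h2 : φc ⟨T f, hmem⟩ = (eqv.symm ⟨T f, hmem⟩) (xpt ξ) := rfl
      rw [h2]
      have h3 : eqv.symm ⟨T f, hmem⟩ = f := by
        apply hinj
        rw [LinearEquiv.ofInjective_symm_apply]
        rfl
      rw [h3]
  choose ψ hψM hψval using hmain
  -- approximations of T χ_{e{l}} by simple functions
  have happrox : ∀ (l : ((Cardinal.aleph 1).ord.ToType)) (n : ℕ),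
      ∃ (m : ℕ) (a : Fin m → Set K) (hcl : ∀ i, IsClopen (a i)) (c : Fin m → ℝ),
        ‖T (chi (e {l}) (heclopen _ (hBfin _ (Set.finite_singleton l)))) -
          ∑ i, c i • chi (a i) (hcl i)‖ ≤ 1 / (n + 1) :=
    fun l n => exists_chi_approx _ (by positivity)
  choose m a hcl c happ using happrox
  set S : Set (Set K) := ⋃ (l : ((Cardinal.aleph 1).ord.ToType)) (n : ℕ), Set.range (a l n)
    with hSdef
  have hScl : ∀ s ∈ S, IsClopen s := by
    intro s hs
    simp only [hSdef, Set.mem_iUnion, Set.mem_range] at hs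
    obtain ⟨l, n, i, rfl⟩ := hs
    exact hcl l n i
  have hScard : #S ≤ aleph 1 := by
    classical
    set F : ((Cardinal.aleph 1).ord.ToType) × ℕ × ℕ → Set K :=
      fun p => if h : p.2.2 < m p.1 p.2.1 then a p.1 p.2.1 ⟨p.2.2, h⟩ else ∅ with hF
    have hsub : S ⊆ Set.range F := by
      intro s hs
      simp only [hSdef, Set.mem_iUnion, Set.mem_range] at hs
      obtain ⟨l, n, i, rfl⟩ := hs
      exact ⟨⟨l, n, i.1⟩, by simp [hF, i.2]⟩
    have h0 : #S ≤ #(Set.range F) := Cardinal.mk_le_mk_of_subset hsub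
    have h1 := Cardinal.mk_range_le_lift (f := F)
    have h2 : #(((Cardinal.aleph 1).ord.ToType) × ℕ × ℕ) ≤ Cardinal.aleph 1 := by
      simp [Cardinal.mk_prod, Cardinal.mk_ord_toType, Cardinal.aleph0_mul_aleph0]
    have h4 := ((Cardinal.lift_le.mpr h0).trans h1).trans (Cardinal.lift_le.mpr h2)
    rw [Cardinal.lift_aleph, Ordinal.lift_one] at h4
    exact Cardinal.lift_le.mp (by rw [Cardinal.lift_aleph, Ordinal.lift_one]; exact h4)
  -- the Boolean subalgebra A0
  set A0 : Set (Set K) := ⋃ n, BAgen S n with hA0def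
  have hA0cl : ∀ b ∈ A0, IsClopen b := by
    intro b hb
    obtain ⟨n, hn⟩ := Set.mem_iUnion.1 hb
    exact BAgen_isClopen hScl n b hn
  have hSA0 : S ⊆ A0 := fun s hs => Set.mem_iUnion.2 ⟨0, Or.inr hs⟩
  refine ⟨A0, hA0cl, ?_, ?_, ?_, ?_, ψ, hψM, ?_⟩
  · exact Set.mem_iUnion.2 ⟨0, Or.inl rfl⟩
  · intro b hb
    obtain ⟨n, hn⟩ := Set.mem_iUnion.1 hb
    exact Set.mem_iUnion.2 ⟨n + 1, Or.inl (Or.inr ⟨b, hn, rfl⟩)⟩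
  · intro b hb d hd
    obtain ⟨nb, hnb⟩ := Set.mem_iUnion.1 hb
    obtain ⟨nd, hnd⟩ := Set.mem_iUnion.1 hd
    refine Set.mem_iUnion.2 ⟨max nb nd + 1, Or.inr ?_⟩
    exact Set.mem_image2_of_mem (BAgen_mono S (le_max_left _ _) hnb)
      (BAgen_mono S (le_max_right _ _) hnd)
  · refine (Cardinal.mk_iUnion_le _).trans ?_
    calc #ℕ * ⨆ n, #(BAgen S n) ≤ ℵ₀ * aleph 1 := by
          rw [Cardinal.mk_nat]
          exact mul_le_mul' le_rfl (ciSup_le' (BAgen_card hScard))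
      _ ≤ aleph 1 * aleph 1 := mul_le_mul' (aleph0_le_aleph 1) le_rfl
      _ = aleph 1 := Cardinal.mul_eq_self (aleph0_le_aleph 1)
  · intro ξ ρ hρ l
    set σ := ρ - ψ ξ with hσ
    have hσ0 : ∀ b (hb : b ∈ A0), σ (chi b (hA0cl b hb)) = 0 := by
      intro b hb
      rw [hσ, ContinuousLinearMap.sub_apply, hρ b hb, sub_self]
    have hσg : ∀ n : ℕ, σ (∑ i, c l n i • chi (a l n i) (hcl l n i)) = 0 := by
      intro n
      rw [map_sum]
      refine Finset.sum_eq_zero fun i _ => ?_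
      rw [map_smul]
      have hmem : a l n i ∈ A0 := hSA0 (Set.mem_iUnion.2 ⟨l, Set.mem_iUnion.2 ⟨n, ⟨i, rfl⟩⟩⟩)
      have h0 : σ (chi (a l n i) (hcl l n i)) = 0 := hσ0 _ hmem
      rw [h0, smul_zero]
    set Tχ := T (chi (e {l}) (heclopen _ (hBfin _ (Set.finite_singleton l)))) with hTχ
    have hbnd : ∀ n : ℕ, |σ Tχ| ≤ ‖σ‖ * (1 / (n + 1)) := by
      intro n
      have h1 : σ Tχ = σ (Tχ - ∑ i, c l n i • chi (a l n i) (hcl l n i)) := by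
        rw [map_sub, hσg n, sub_zero]
      rw [h1, ← Real.norm_eq_abs]
      calc ‖σ (Tχ - ∑ i, c l n i • chi (a l n i) (hcl l n i))‖
          ≤ ‖σ‖ * ‖Tχ - ∑ i, c l n i • chi (a l n i) (hcl l n i)‖ := σ.le_opNorm _
        _ ≤ ‖σ‖ * (1 / (n + 1)) :=
            mul_le_mul_of_nonneg_left (happ l n) (norm_nonneg σ)
    have hσTχ : σ Tχ = 0 := by
      have habs : |σ Tχ| ≤ 0 := by
        refine le_of_forall_pos_le_add fun ε hε => ?_
        obtain ⟨n, hn⟩ := exists_nat_gt (‖σ‖ / ε)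
        have h2 := hbnd n
        have h3 : ‖σ‖ * (1 / (n + 1)) < ε := by
          rw [div_lt_iff₀ hε] at hn
          have hn1 : (0:ℝ) < (n : ℝ) + 1 := by positivity
          rw [mul_one_div, div_lt_iff₀ hn1]
          nlinarith [norm_nonneg σ]
        linarith
      exact abs_eq_zero.mp (le_antisymm habs (abs_nonneg _))
    have hfin : ρ Tχ = ψ ξ Tχ := by
      have h4 : σ Tχ = ρ Tχ - ψ ξ Tχ := by rw [hσ, ContinuousLinearMap.sub_apply]
      rw [h4] at hσTχ
      linarith
    rw [hfin, hTχ, hψval ξ]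
    exact hchi_val l ξ _
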